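/- The entropy of softmax(x/α) is nondecreasing in the temperature α > 0: if 0 < α₁ ≤ α₂ then H(softmax(x/α₁)) ≤ H(softmax(x/α₂)). -/

import Mathlib

open Finset

noncomputable def softmax {d : ℕ} (x : Fin d → ℝ) : Fin d → ℝ :=
  fun j => Real.exp (x j) / ∑ i, Real.exp (x i)

noncomputable def shannonEntropy {d : ℕ} (y : Fin d → ℝ) : ℝ :=
  -∑ i, y i * Real.log (y i)

section aux

variable {d : ℕ} (x : Fin d → ℝ)

noncomputable def Zf (β : ℝ) : ℝ := ∑ i, Real.exp (β * x i)
noncomputable def Wf (β : ℝ) : ℝ := ∑ i, x i * Real.exp (β * x i)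
noncomputable def Vf (β : ℝ) : ℝ := ∑ i, (x i)^2 * Real.exp (β * x i)
noncomputable def phiF (β : ℝ) : ℝ := Wf x β / Zf x β

lemma Zf_pos [NeZero d] (β : ℝ) : 0 < Zf x β :=
  Finset.sum_pos (fun i _ => Real.exp_pos _)
    ⟨⟨0, Nat.pos_of_ne_zero (NeZero.ne d)⟩, mem_univ _⟩

lemma hasDerivAt_Zf (β : ℝ) : HasDerivAt (Zf x) (Wf x β) β := by
  apply HasDerivAt.fun_sum
  intro i _
  have h := ((hasDerivAt_id β).mul_const (x i)).exp
  simpa [mul_comm] using h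

lemma hasDerivAt_Wf (β : ℝ) : HasDerivAt (Wf x) (Vf x β) β := by
  apply HasDerivAt.fun_sum
  intro i _
  have h := (((hasDerivAt_id β).mul_const (x i)).exp).const_mul (x i)
  simp only [id_eq] at h
  convert h using 1
  · rfl
  ring

lemma hasDerivAt_phiF [NeZero d] (β : ℝ) :
    HasDerivAt (phiF x) ((Vf x β * Zf x β - Wf x β * Wf x β) / (Zf x β)^2) β :=
  (hasDerivAt_Wf x β).div (hasDerivAt_Zf x β) (Zf_pos x β).ne'

lemma var_nonneg (β : ℝ) : Wf x β * Wf x β ≤ Vf x β * Zf x β := by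
  have h := Finset.sum_mul_sq_le_sq_mul_sq univ
    (fun i => x i * Real.exp (β * x i / 2)) (fun i => Real.exp (β * x i / 2))
  have e1 : ∀ i : Fin d, (x i * Real.exp (β * x i / 2)) * Real.exp (β * x i / 2)
      = x i * Real.exp (β * x i) := by
    intro i
    rw [mul_assoc, ← Real.exp_add]
    ring_nf
  have e3 : ∀ i : Fin d, (Real.exp (β * x i / 2)) ^ 2 = Real.exp (β * x i) := by
    intro i
    rw [sq, ← Real.exp_add]
    ring_nf
  have e2 : ∀ i : Fin d, (x i * Real.exp (β * x i / 2)) ^ 2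
      = (x i)^2 * Real.exp (β * x i) := by
    intro i
    rw [mul_pow, e3 i]
  simp only [e1, e2, e3] at h
  calc Wf x β * Wf x β = (Wf x β) ^ 2 := (sq _).symm
    _ ≤ Vf x β * Zf x β := h

lemma phiF_mono [NeZero d] : Monotone (phiF x) := by
  apply monotone_of_deriv_nonneg
  · exact fun β => (hasDerivAt_phiF x β).differentiableAt
  · intro β
    rw [(hasDerivAt_phiF x β).deriv]
    apply div_nonneg _ (sq_nonneg _)
    linarith [var_nonneg x β]

lemma entropy_eq [NeZero d] (β : ℝ) :
    shannonEntropy (softmax (fun j => β * x j))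
      = Real.log (Zf x β) - β * phiF x β := by
  have hZ := Zf_pos x β
  have key : ∀ j : Fin d, Real.exp (β * x j) / Zf x β * Real.log (Real.exp (β * x j) / Zf x β)
      = (β * (x j * Real.exp (β * x j)) - Real.log (Zf x β) * Real.exp (β * x j)) / Zf x β := by
    intro j
    rw [Real.log_div (Real.exp_ne_zero _) hZ.ne', Real.log_exp]
    ring
  unfold shannonEntropy softmax phiF
  show -∑ j, Real.exp (β * x j) / Zf x β * Real.log (Real.exp (β * x j) / Zf x β) = _
  rw [Finset.sum_congr rfl (fun j _ => key j), ← Finset.sum_div, Finset.sum_sub_distrib,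
    ← Finset.mul_sum, ← Finset.mul_sum]
  show -((β * Wf x β - Real.log (Zf x β) * Zf x β) / Zf x β) = _
  field_simp
  ring

lemma entropy_mono_beta [NeZero d] {β₁ β₂ : ℝ} (hβ2 : 0 < β₂) (h : β₂ ≤ β₁) :
    Real.log (Zf x β₁) - β₁ * phiF x β₁ ≤ Real.log (Zf x β₂) - β₂ * phiF x β₂ := by
  rcases eq_or_lt_of_le h with rfl | hlt
  · exact le_refl _
  · have hg : ∀ t : ℝ, HasDerivAt (fun s => Real.log (Zf x s)) (phiF x t) t :=
      fun t => (hasDerivAt_Zf x t).log (Zf_pos x t).ne'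
    have hcont : ContinuousOn (fun s => Real.log (Zf x s)) (Set.Icc β₂ β₁) :=
      (Continuous.continuousOn (by
        exact continuous_iff_continuousAt.2 fun t => (hg t).differentiableAt.continuousAt))
    obtain ⟨c, hc, hceq⟩ := exists_hasDerivAt_eq_slope (fun s => Real.log (Zf x s)) (phiF x)
      hlt hcont (fun t _ => hg t)
    have h1 : phiF x c ≤ phiF x β₁ := phiF_mono x hc.2.le
    have h2 : phiF x β₂ ≤ phiF x β₁ := phiF_mono x h
    have hslope : Real.log (Zf x β₁) - Real.log (Zf x β₂) = (β₁ - β₂) * phiF x c := by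
      rw [eq_div_iff (by linarith : β₁ - β₂ ≠ 0)] at hceq
      linarith [hceq]
    nlinarith [hslope, h1, h2, hβ2, hlt]

end aux

/-- The entropy of softmax(x/α) is nondecreasing in the temperature α > 0. -/
theorem entropy_softmax_monotone_temperature {d : ℕ} (x : Fin d → ℝ)
    (α₁ α₂ : ℝ) (h1 : 0 < α₁) (h12 : α₁ ≤ α₂) :
    shannonEntropy (softmax (fun j => x j / α₁))
      ≤ shannonEntropy (softmax (fun j => x j / α₂)) := by
  rcases Nat.eq_zero_or_pos d with hd | hd
  · subst hd; simp [shannonEntropy]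
  · haveI : NeZero d := ⟨hd.ne'⟩
    have h2 : 0 < α₂ := lt_of_lt_of_le h1 h12
    have e1 : (fun j => x j / α₁) = (fun j => α₁⁻¹ * x j) := by
      funext j; rw [div_eq_inv_mul]
    have e2 : (fun j => x j / α₂) = (fun j => α₂⁻¹ * x j) := by
      funext j; rw [div_eq_inv_mul]
    rw [e1, e2, entropy_eq x α₁⁻¹, entropy_eq x α₂⁻¹]
    exact entropy_mono_beta x (inv_pos.2 h2) (inv_anti₀ h1 h12)
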